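/- Let y be a solution (in the sense of Definition 1) of the system (ps): ẋ + h(t,x) = ε f(t,x,ε), and define u(t) := x⁻¹(t, y(t), 0). Then at every t with y(t) ∉ S the function u is differentiable and satisfies the standard form of the averaging principle (pss): u̇(t) = ε (∂_u x(t, u(t), 0))⁻¹ f(t, x(t, u(t), 0), ε). -/

import Mathlib

/-- the change of variables `u(t) = x⁻¹(t, y(t), 0)` transforms any
solution `y` (in the sense of Definition 1) of the discontinuous system
(ps): `ẋ + h(t,x) = ε f(t,x,ε)` into a solution of the standard form of the
averaging principle (pss): `u̇ = ε (∂_u x(t,u,0))⁻¹ f(t, x(t,u,0), ε)`, at every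
time `t` with `y(t) ∉ S`. -/
theorem change_of_variables_to_standard_form
    (n : ℕ) (T ε : ℝ)
    (h : ℝ → (Fin n → ℝ) → (Fin n → ℝ))
    (hh : ContDiff ℝ 1 (fun p : ℝ × (Fin n → ℝ) => h p.1 p.2))
    (f : ℝ → (Fin n → ℝ) → ℝ → (Fin n → ℝ))
    (hfper : ∀ t ξ ε', f (t + T) ξ ε' = f t ξ ε')
    (S : Set (Fin n → ℝ))
    (hf : ∀ (t ε' : ℝ), ε' ∈ Set.Icc (0 : ℝ) 1 → ∀ ξ ∉ S,
      ContDiffAt ℝ 1 (fun ζ => f t ζ ε') ξ)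
    -- X t ξ = x(t,ξ,0) is the flow of the generating system (np): ẋ + h(t,x) = 0,
    -- a C¹ diffeomorphism in ξ with inverse Xinv t = x⁻¹(t,·,0)
    (X Xinv : ℝ → (Fin n → ℝ) → (Fin n → ℝ))
    (hX0 : ∀ ξ, X 0 ξ = ξ)
    (hXode : ∀ (ξ : Fin n → ℝ) (t : ℝ), HasDerivAt (fun τ => X τ ξ) (-h t (X t ξ)) t)
    (hXsmooth : ContDiff ℝ 1 (fun p : ℝ × (Fin n → ℝ) => X p.1 p.2))
    (hXinvsmooth : ContDiff ℝ 1 (fun p : ℝ × (Fin n → ℝ) => Xinv p.1 p.2))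
    (hXinv : ∀ (t : ℝ) (ξ : Fin n → ℝ), Xinv t (X t ξ) = ξ ∧ X t (Xinv t ξ) = ξ)
    -- y is a solution of (ps) in the sense of Definition 1
    (y : ℝ → (Fin n → ℝ))
    (hycont : Continuous y)
    (hysol : ∀ t, y t ∉ S → HasDerivAt y (ε • f t (y t) ε - h t (y t)) t) :
    ∀ t, y t ∉ S →
      HasDerivAt (fun τ => Xinv τ (y τ))
        (ε • (fderiv ℝ (X t) (Xinv t (y t))).inverse
          (f t (X t (Xinv t (y t))) ε)) t := by
  intro t hS
  have hy' : HasDerivAt y (ε • f t (y t) ε - h t (y t)) t := hysol t hS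
  set u0 : Fin n → ℝ := Xinv t (y t) with hu0
  have hXtu0 : X t u0 = y t := (hXinv t (y t)).2
  -- derivative of u(τ) = Xinv τ (y τ)
  have hGdiff : DifferentiableAt ℝ (fun p : ℝ × (Fin n → ℝ) => Xinv p.1 p.2) (t, y t) :=
    (hXinvsmooth.differentiable one_ne_zero) _
  set L' := fderiv ℝ (fun p : ℝ × (Fin n → ℝ) => Xinv p.1 p.2) (t, y t) with hL'
  have hpair : HasDerivAt (fun τ => (τ, y τ))
      ((1 : ℝ), ε • f t (y t) ε - h t (y t)) t :=
    HasDerivAt.prodMk (hasDerivAt_id t) hy'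
  have hu' : HasDerivAt (fun τ => Xinv τ (y τ))
      (L' (1, ε • f t (y t) ε - h t (y t))) t :=
    HasFDerivAt.comp_hasDerivAt (l := fun p : ℝ × (Fin n → ℝ) => Xinv p.1 p.2) t hGdiff.hasFDerivAt hpair
  set d : Fin n → ℝ := L' (1, ε • f t (y t) ε - h t (y t)) with hd
  -- derivative of τ ↦ X τ (Xinv τ (y τ)) = y τ
  have hFdiff : DifferentiableAt ℝ (fun p : ℝ × (Fin n → ℝ) => X p.1 p.2) (t, u0) :=
    (hXsmooth.differentiable one_ne_zero) _
  set LF := fderiv ℝ (fun p : ℝ × (Fin n → ℝ) => X p.1 p.2) (t, u0) with hLF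
  have hpair2 : HasDerivAt (fun τ => (τ, Xinv τ (y τ))) ((1 : ℝ), d) t :=
    HasDerivAt.prodMk (hasDerivAt_id t) hu'
  have hcomp : HasDerivAt (fun τ => X τ (Xinv τ (y τ))) (LF (1, d)) t := by
    exact HasFDerivAt.comp_hasDerivAt (l := fun p : ℝ × (Fin n → ℝ) => X p.1 p.2) t hFdiff.hasFDerivAt hpair2
  have heqfun : (fun τ => X τ (Xinv τ (y τ))) = y := by
    funext τ; exact (hXinv τ (y τ)).2
  rw [heqfun] at hcomp
  have hLF1d : LF (1, d) = ε • f t (y t) ε - h t (y t) := hcomp.unique hy'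
  -- LF (1, 0) = -h t (y t)
  have hfix : HasDerivAt (fun τ => X τ u0) (LF (1, 0)) t := by
    have hpair3 : HasDerivAt (fun τ => (τ, u0)) ((1 : ℝ), (0 : Fin n → ℝ)) t :=
      HasDerivAt.prodMk (hasDerivAt_id t) (hasDerivAt_const t u0)
    exact hFdiff.hasFDerivAt.comp_hasDerivAt t hpair3
  have hLF10 : LF (1, 0) = -h t (y t) := by
    have := hfix.unique (hXode u0 t)
    rw [this, hXtu0]
  have hLF0d : LF (0, d) = ε • f t (y t) ε := by
    have : ((1 : ℝ), d) = ((1 : ℝ), (0 : Fin n → ℝ)) + ((0 : ℝ), d) := by simp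
    rw [this, map_add, hLF10] at hLF1d
    linear_combination (norm := abel) hLF1d
  -- partial derivative in ξ : A = fderiv ℝ (X t) u0
  have hA : HasFDerivAt (X t)
      (LF.comp ((0 : (Fin n → ℝ) →L[ℝ] ℝ).prod (ContinuousLinearMap.id ℝ (Fin n → ℝ)))) u0 := by
    have hinr : HasFDerivAt (fun ξ : Fin n → ℝ => ((t : ℝ), ξ))
        ((0 : (Fin n → ℝ) →L[ℝ] ℝ).prod (ContinuousLinearMap.id ℝ (Fin n → ℝ))) u0 :=
      HasFDerivAt.prodMk (hasFDerivAt_const t u0) (hasFDerivAt_id u0)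
    exact hFdiff.hasFDerivAt.comp u0 hinr
  set A : (Fin n → ℝ) →L[ℝ] (Fin n → ℝ) := LF.comp ((0 : (Fin n → ℝ) →L[ℝ] ℝ).prod (ContinuousLinearMap.id ℝ (Fin n → ℝ))) with hAdef
  have hAfderiv : fderiv ℝ (X t) u0 = A := hA.fderiv
  have hAapp : ∀ v, A v = LF (0, v) := fun v => rfl
  -- partial derivative of Xinv in ξ : B
  have hB : HasFDerivAt (Xinv t)
      ((fderiv ℝ (fun p : ℝ × (Fin n → ℝ) => Xinv p.1 p.2) (t, y t)).comp
        ((0 : (Fin n → ℝ) →L[ℝ] ℝ).prod (ContinuousLinearMap.id ℝ (Fin n → ℝ)))) (y t) := by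
    have hinr : HasFDerivAt (fun ξ : Fin n → ℝ => ((t : ℝ), ξ))
        ((0 : (Fin n → ℝ) →L[ℝ] ℝ).prod (ContinuousLinearMap.id ℝ (Fin n → ℝ))) (y t) :=
      HasFDerivAt.prodMk (hasFDerivAt_const t (y t)) (hasFDerivAt_id (y t))
    exact (hGdiff.hasFDerivAt).comp (y t) hinr
  set B : (Fin n → ℝ) →L[ℝ] (Fin n → ℝ) := (fderiv ℝ (fun p : ℝ × (Fin n → ℝ) => Xinv p.1 p.2) (t, y t)).comp
        ((0 : (Fin n → ℝ) →L[ℝ] ℝ).prod (ContinuousLinearMap.id ℝ (Fin n → ℝ))) with hBdef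
  -- B ∘ A = id at u0
  have hBA : ∀ v, B (A v) = v := by
    have hcomp1 : HasFDerivAt (fun ξ => Xinv t (X t ξ)) (B.comp A) u0 := by
      have hB' : HasFDerivAt (Xinv t) B (X t u0) := hXtu0.symm ▸ hB
      exact hB'.comp u0 hA
    have hid : HasFDerivAt (fun ξ : Fin n → ℝ => Xinv t (X t ξ))
        (ContinuousLinearMap.id ℝ (Fin n → ℝ)) u0 := by
      have : (fun ξ : Fin n → ℝ => Xinv t (X t ξ)) = id := by
        funext ξ; exact (hXinv t ξ).1
      rw [this]; exact hasFDerivAt_id u0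
    have := hcomp1.unique hid
    intro v; calc B (A v) = (B.comp A) v := rfl
      _ = v := by rw [this]; rfl
  -- A ∘ B = id at y t
  have hAB : ∀ v, A (B v) = v := by
    have hcomp2 : HasFDerivAt (fun ξ => X t (Xinv t ξ)) (A.comp B) (y t) := by
      exact (hu0 ▸ hA).comp (y t) hB
    have hid : HasFDerivAt (fun ξ : Fin n → ℝ => X t (Xinv t ξ))
        (ContinuousLinearMap.id ℝ (Fin n → ℝ)) (y t) := by
      have : (fun ξ : Fin n → ℝ => X t (Xinv t ξ)) = id := by
        funext ξ; exact (hXinv t ξ).2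
      rw [this]; exact hasFDerivAt_id (y t)
    have := hcomp2.unique hid
    intro v; calc A (B v) = (A.comp B) v := rfl
      _ = v := by rw [this]; rfl
  -- A is invertible with inverse B
  set e : (Fin n → ℝ) ≃L[ℝ] (Fin n → ℝ) := ContinuousLinearEquiv.equivOfInverse A B hBA hAB with he
  have hAe : (e : (Fin n → ℝ) →L[ℝ] (Fin n → ℝ)) = A := rfl
  have hAinv : A.inverse = B := by
    rw [← hAe, ContinuousLinearMap.inverse_equiv]
    rfl
  -- conclude
  have hgoal : ε • (fderiv ℝ (X t) u0).inverse (f t (X t u0) ε) = d := by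
    rw [hAfderiv, hAinv, hXtu0, ← map_smul, ← hLF0d, ← hAapp, hBA]
  rw [hgoal]
  exact hu'
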